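/- Let u be a packed word with letter set {1,…,n}, let i ∈ {1,…,n}, and let v be a packed word with letter set {1,…,m}. Then the left composition u ∘←_i v, defined as the word obtained from Inc_{m−1}^{i}(u) by replacing every occurrence of the letter i by the word Inc_{i−1}^{0}(v), is a packed word with letter set {1,…,n+m−1}. -/

import Mathlib

/-- Increment by `α` every letter strictly greater than `β`. -/
def Inc (α β : ℕ) (u : List ℕ) : List ℕ := u.map fun a => if β < a then a + α else a

/-- Maximal letter of a word. -/
def maxLetter (v : List ℕ) : ℕ := v.foldr max 0

/-- A packed word whose letter set is exactly `{1, …, k}`. -/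
def IsPackedOn (k : ℕ) (w : List ℕ) : Prop := w.toFinset = Finset.Icc 1 k

/-- A packed word. -/
def IsPacked (w : List ℕ) : Prop := ∃ k, IsPackedOn k w

/-- A permutation of `{1, …, n}` identified with the word `σ(1) ⋯ σ(n)`. -/
def IsPermWord (n : ℕ) (σ : List ℕ) : Prop :=
  σ.length = n ∧ σ.toFinset = Finset.Icc 1 n

/-- `σ` is the standardization of `w`: a permutation word of `{1, …, n}` with the same
inversions as `w` (0-based indexing). -/
def IsStdOf (w σ : List ℕ) : Prop :=
  IsPermWord w.length σ ∧
    ∀ i j : ℕ, i < j → j < w.length →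
      (w.getD j 0 < w.getD i 0 ↔ σ.getD j 0 < σ.getD i 0)

/-- The weakly increasing rearrangement (composition type) of a word. -/
def chi (w : List ℕ) : List ℕ := List.insertionSort (· ≤ ·) w

/-- Right composition `u ∘→_i v` of packed words (`i` is 1-based). -/
def rightComp (u : List ℕ) (i : ℕ) (v : List ℕ) : List ℕ :=
  Inc (maxLetter v - 1) (u.getD (i - 1) 0) (u.take (i - 1))
    ++ Inc (u.getD (i - 1) 0 - 1) 0 v
    ++ Inc (maxLetter v - 1) (u.getD (i - 1) 0 - 1) (u.drop i)

/-- Left composition `u ∘←_i v` of packed words: replace in `Inc (m-1) i u` every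
occurrence of the letter `i` by the word `Inc (i-1) 0 v`, where `m` is the maximal
letter of `v`. -/
def leftComp (u : List ℕ) (i : ℕ) (v : List ℕ) : List ℕ :=
  u.flatMap fun a =>
    if a = i then Inc (i - 1) 0 v else [if i < a then a + (maxLetter v - 1) else a]

/-- Block composition `B_i(α, β)` of permutation words (`i` is 1-based, `β` a permutation
of `{1, …, m}` with `m = β.length`). -/
def blockComp (α : List ℕ) (i : ℕ) (β : List ℕ) : List ℕ :=
  Inc (β.length - 1) (α.getD (i - 1) 0) (α.take (i - 1))
    ++ Inc (α.getD (i - 1) 0 - 1) 0 β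
    ++ Inc (β.length - 1) (α.getD (i - 1) 0 - 1) (α.drop i)

/-- The inverse of a permutation word. -/
def invWord (σ : List ℕ) : List ℕ :=
  (List.range σ.length).map fun p => σ.idxOf (p + 1) + 1

/-- The right action of a permutation word `σ` of `{1, …, n}` on a packed word with
letter set `{1, …, n}`: the `p`-th letter of `u · σ` is `σ⁻¹(u(p))`. -/
def permAct (u σ : List ℕ) : List ℕ := u.map fun a => (invWord σ).getD (a - 1) 0

/-- The identity permutation word of `{1, …, m}`. -/
def idWord (m : ℕ) : List ℕ := (List.range m).map (· + 1)

/-- `First k u`: keep only the `k` leftmost occurrences of each letter of `u`. -/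
def First (k : ℕ) (u : List ℕ) : List ℕ :=
  (List.range u.length).filterMap fun p =>
    if (u.take p).count (u.getD p 0) < k then some (u.getD p 0) else none


lemma le_maxLetter {v : List ℕ} {a : ℕ} (ha : a ∈ v) : a ≤ maxLetter v := by
  induction v with
  | nil => simp at ha
  | cons b t ih =>
    simp only [List.mem_cons] at ha
    simp only [maxLetter, List.foldr_cons]
    rcases ha with h | h
    · omega
    · exact le_trans (ih h) (le_max_right _ _)

lemma maxLetter_le {v : List ℕ} {m : ℕ} (h : ∀ a ∈ v, a ≤ m) : maxLetter v ≤ m := by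
  induction v with
  | nil => simp [maxLetter]
  | cons b t ih =>
    simp only [maxLetter, List.foldr_cons]
    have := h b (by simp)
    have := ih fun a ha => h a (by simp [ha])
    simp only [maxLetter] at this
    omega

lemma maxLetter_of_packed {m : ℕ} {v : List ℕ} (hv : IsPackedOn m v) (hm : 1 ≤ m) :
    maxLetter v = m := by
  have h1 : m ∈ v := by
    rw [← List.mem_toFinset, hv, Finset.mem_Icc]; omega
  have h2 : ∀ a ∈ v, a ≤ m := fun a ha => by
    have : a ∈ v.toFinset := List.mem_toFinset.mpr ha
    rw [hv, Finset.mem_Icc] at this; omega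
  exact le_antisymm (maxLetter_le h2) (le_maxLetter h1)

/-- The left composition of packed words is a packed word with letter set
`{1, …, n + m - 1}`. -/
theorem leftComp_isPacked (n m i : ℕ) (u v : List ℕ)
    (hu : IsPackedOn n u) (hi : i ∈ Finset.Icc 1 n)
    (hv : IsPackedOn m v) (hm : 1 ≤ m) :
    IsPackedOn (n + m - 1) (leftComp u i v) := by
  have hmax : maxLetter v = m := maxLetter_of_packed hv hm
  rw [Finset.mem_Icc] at hi
  have humem : ∀ a, a ∈ u ↔ (1 ≤ a ∧ a ≤ n) := fun a => by
    rw [← List.mem_toFinset, hu, Finset.mem_Icc]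
  have hvmem : ∀ b, b ∈ v ↔ (1 ≤ b ∧ b ≤ m) := fun b => by
    rw [← List.mem_toFinset, hv, Finset.mem_Icc]
  unfold IsPackedOn
  ext x
  simp only [List.mem_toFinset, leftComp, List.mem_flatMap, Finset.mem_Icc, hmax]
  constructor
  · rintro ⟨a, ha, hx⟩
    have ha' := (humem a).mp ha
    by_cases hai : a = i
    · rw [if_pos hai] at hx
      simp only [Inc, List.mem_map] at hx
      obtain ⟨b, hb, hbx⟩ := hx
      have hb' := (hvmem b).mp hb
      rw [if_pos (by omega)] at hbx
      omega
    · rw [if_neg hai, List.mem_singleton] at hx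
      split at hx <;> omega
  · rintro ⟨hx1, hx2⟩
    by_cases h1 : x < i
    · refine ⟨x, (humem x).mpr ⟨hx1, by omega⟩, ?_⟩
      rw [if_neg (by omega), List.mem_singleton, if_neg (by omega)]
    · by_cases h2 : x ≤ i + m - 1
      · refine ⟨i, (humem i).mpr ⟨hi.1, hi.2⟩, ?_⟩
        rw [if_pos rfl]
        simp only [Inc, List.mem_map]
        exact ⟨x - i + 1, (hvmem _).mpr ⟨by omega, by omega⟩,
          by rw [if_pos (by omega)]; omega⟩
      · refine ⟨x - m + 1, (humem _).mpr ⟨by omega, by omega⟩, ?_⟩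
        rw [if_neg (by omega), List.mem_singleton, if_pos (by omega)]
        omega
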